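/- For every n ≥ 1, every a ∈ ℤⁿ and every m ≥ 1, the rational number F(m,a) is an integer. -/

import Mathlib

set_option maxRecDepth 8000

open Polynomial in
/-- The sum of `j`-th powers of the roots (with multiplicity, in `ℂ`) of
`Xⁿ − a₁Xⁿ⁻¹ + a₂Xⁿ⁻² − ⋯ + (−1)ⁿaₙ`. -/
noncomputable def rootPowerSum (n : ℕ) (a : Fin n → ℤ) (j : ℕ) : ℂ :=
  ((Polynomial.roots
      (X ^ n + ∑ i : Fin n, C ((-1 : ℂ) ^ ((i : ℕ) + 1) * (a i : ℂ)) * X ^ (n - ((i : ℕ) + 1)))).map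
    (fun θ => θ ^ j)).sum

/-- `F(m,a) = Σ_{j ∣ m} (−1)ʲ (sⱼ/j) Π_{p ∣ m/j} (1 − 1/p)`, where `s j` is the `j`-th
power sum of the roots (given here as an abstract integer-valued function). -/
noncomputable def Fval (s : ℕ → ℤ) (m : ℕ) : ℚ :=
  ∑ j ∈ m.divisors,
    (-1 : ℚ) ^ j * (s j : ℚ) / (j : ℚ) *
      ∏ p ∈ (m / j).primeFactors, (1 - 1 / (p : ℚ))

section DworkLemma

private lemma fermat_int (p : ℕ) (hp : p.Prime) (x : ℤ) : (p : ℤ) ∣ x ^ p - x := by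
  haveI := Fact.mk hp
  have : ((x ^ p - x : ℤ) : ZMod p) = 0 := by
    push_cast
    rw [ZMod.pow_card]
    ring
  exact (ZMod.intCast_zmod_eq_zero_iff_dvd _ _).mp this

private lemma pow_lift (p : ℕ) (hp : p.Prime) (k : ℕ) (hk : 1 ≤ k) (A B : ℤ)
    (h : (p : ℤ) ^ k ∣ A - B) : (p : ℤ) ^ (k + 1) ∣ A ^ p - B ^ p := by
  haveI := Fact.mk hp
  have h1 : (p : ℤ) ∣ A - B := dvd_trans (dvd_pow_self _ (Nat.one_le_iff_ne_zero.mp hk)) h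
  have hgeom : (∑ i ∈ Finset.range p, A ^ i * B ^ (p - 1 - i)) * (A - B) = A ^ p - B ^ p :=
    geom_sum₂_mul A B p
  have h2 : (p : ℤ) ∣ ∑ i ∈ Finset.range p, A ^ i * B ^ (p - 1 - i) := by
    have hAB : ((A : ZMod p)) = (B : ZMod p) := by
      have := (ZMod.intCast_zmod_eq_zero_iff_dvd _ p).mpr h1
      push_cast at this
      linear_combination this
    have : ((∑ i ∈ Finset.range p, A ^ i * B ^ (p - 1 - i) : ℤ) : ZMod p) = 0 := by
      push_cast
      rw [hAB]
      have : ∀ i ∈ Finset.range p, (B : ZMod p) ^ i * (B : ZMod p) ^ (p - 1 - i)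
          = (B : ZMod p) ^ (p - 1) := by
        intro i hi
        rw [← pow_add]
        congr 1
        have := Finset.mem_range.mp hi
        omega
      rw [Finset.sum_congr rfl this, Finset.sum_const, Finset.card_range]
      simp [ZMod.natCast_self]
    exact (ZMod.intCast_zmod_eq_zero_iff_dvd _ _).mp this
  calc (p : ℤ) ^ (k + 1) = (p : ℤ) ^ k * (p : ℤ) := by ring
  _ ∣ (A - B) * (∑ i ∈ Finset.range p, A ^ i * B ^ (p - 1 - i)) := mul_dvd_mul h h2
  _ = A ^ p - B ^ p := by rw [mul_comm]; exact hgeom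

private lemma dwork_lemma {S : Type*} [CommRing S] (p : ℕ) (hp : p.Prime)
    (ψ : S →+* S) (hψ : ∀ u : S, ∃ v : S, ψ u = u ^ p + (p : S) * v)
    (ev : S →+* ℤ) :
    ∀ k u, (p : ℤ) ^ (k + 1) ∣ ev (ψ^[k + 1] u) - ev (ψ^[k] u) := by
  have iter_map : ∀ (j : ℕ) (x y : S), ψ^[j] (x ^ p + (p : S) * y)
      = (ψ^[j] x) ^ p + (p : S) * ψ^[j] y := by
    intro j
    induction j with
    | zero => intro x y; rfl
    | succ j ih =>
      intro x y
      rw [Function.iterate_succ_apply, Function.iterate_succ_apply,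
        Function.iterate_succ_apply, map_add, map_mul, map_pow, map_natCast, ih]
  intro k
  induction k with
  | zero =>
    intro u
    obtain ⟨v, hv⟩ := hψ u
    simp only [zero_add, Function.iterate_one, Function.iterate_zero, id_eq, pow_one]
    rw [hv, map_add, map_mul, map_pow, map_natCast]
    have : ev u ^ p + (p : ℤ) * ev v - ev u = (ev u ^ p - ev u) + (p : ℤ) * ev v := by ring
    rw [this]
    exact dvd_add (fermat_int p hp _) (Dvd.intro _ rfl)
  | succ k ih =>
    intro u
    obtain ⟨v, hv⟩ := hψ u
    have key : ∀ j : ℕ, ψ^[j + 1] u = (ψ^[j] u) ^ p + (p : S) * ψ^[j] v := by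
      intro j
      rw [Function.iterate_succ_apply, hv, iter_map]
    have e1 : ev (ψ^[k + 1 + 1] u)
        = (ev (ψ^[k + 1] u)) ^ p + (p : ℤ) * ev (ψ^[k + 1] v) := by
      rw [key (k + 1), map_add, map_mul, map_pow, map_natCast]
    have e2 : ev (ψ^[k + 1] u)
        = (ev (ψ^[k] u)) ^ p + (p : ℤ) * ev (ψ^[k] v) := by
      rw [key k, map_add, map_mul, map_pow, map_natCast]
    have e3 : ev (ψ^[k + 1 + 1] u) - ev (ψ^[k + 1] u)
        = (ev (ψ^[k + 1] u) ^ p - ev (ψ^[k] u) ^ p)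
          + (p : ℤ) * (ev (ψ^[k + 1] v) - ev (ψ^[k] v)) := by
      linear_combination e1 - e2
    rw [e3]
    refine dvd_add (pow_lift p hp (k + 1) (Nat.le_add_left 1 k) _ _ (ih u)) ?_
    rw [pow_succ, mul_comm]
    exact mul_dvd_mul_left _ (ih v)

end DworkLemma

section SymmetricPart

open MvPolynomial

private noncomputable def adamsOp (n p : ℕ) :
    MvPolynomial (Fin n) ℤ →ₐ[ℤ] MvPolynomial (Fin n) ℤ :=
  aeval fun i => X i ^ p

private lemma adamsOp_psum (n p c : ℕ) :
    adamsOp n p (psum (Fin n) ℤ c) = psum (Fin n) ℤ (p * c) := by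
  simp only [adamsOp, psum, map_sum, map_pow, aeval_X, ← pow_mul]

private lemma adamsOp_rename (n p : ℕ) (σ : Equiv.Perm (Fin n)) (f : MvPolynomial (Fin n) ℤ) :
    rename σ (adamsOp n p f) = adamsOp n p (rename σ f) := by
  have : (rename (R := ℤ) σ).comp (adamsOp n p) = (adamsOp n p).comp (rename σ) := by
    apply MvPolynomial.algHom_ext
    intro i
    simp [adamsOp]
  exact congrFun (congrArg (DFunLike.coe) this) f

private lemma adamsOp_isSymmetric (n p : ℕ) {f : MvPolynomial (Fin n) ℤ}
    (hf : f.IsSymmetric) : (adamsOp n p f).IsSymmetric := by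
  intro σ
  rw [adamsOp_rename, hf σ]

private lemma adamsOp_map (n p : ℕ) (hp : p.Prime) (f : MvPolynomial (Fin n) ℤ) :
    map (Int.castRingHom (ZMod p)) (adamsOp n p f)
      = (map (Int.castRingHom (ZMod p)) f) ^ p := by
  haveI := Fact.mk hp
  induction f using MvPolynomial.induction_on with
  | C r =>
    simp only [adamsOp, aeval_C, algebraMap_eq, map_C]
    rw [← C_pow, ZMod.pow_card]
  | add f g hf hg =>
    rw [map_add, map_add, map_add, hf, hg, add_pow_char]
  | mul_X f i hf =>
    rw [map_mul, map_mul, map_mul, hf]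
    simp only [adamsOp, aeval_X, map_pow, map_X]
    rw [mul_pow]

private lemma adamsOp_sub_pow (n p : ℕ) (hp : p.Prime) (f : MvPolynomial (Fin n) ℤ) :
    ∃ g, adamsOp n p f = f ^ p + C (p : ℤ) * g := by
  have hdvd : C (p : ℤ) ∣ adamsOp n p f - f ^ p := by
    rw [MvPolynomial.C_dvd_iff_dvd_coeff]
    intro i
    have h0 : map (Int.castRingHom (ZMod p)) (adamsOp n p f - f ^ p) = 0 := by
      rw [map_sub, adamsOp_map n p hp, map_pow, sub_self]
    have := congrArg (fun q => MvPolynomial.coeff i q) h0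
    simp only [coeff_map, coeff_zero] at this
    exact_mod_cast (ZMod.intCast_zmod_eq_zero_iff_dvd _ _).mp this
  obtain ⟨g, hg⟩ := hdvd
  exact ⟨g, by linear_combination hg⟩

private noncomputable def psumS (n j : ℕ) : symmetricSubalgebra (Fin n) ℤ :=
  ⟨psum (Fin n) ℤ j, psum_isSymmetric _ _ j⟩

private noncomputable def adamsS (n p : ℕ) :
    symmetricSubalgebra (Fin n) ℤ →ₐ[ℤ] symmetricSubalgebra (Fin n) ℤ :=
  AlgHom.codRestrict ((adamsOp n p).comp (symmetricSubalgebra (Fin n) ℤ).val) _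
    (fun u => (mem_symmetricSubalgebra _).mpr
      (adamsOp_isSymmetric n p ((mem_symmetricSubalgebra _).mp u.2)))

private lemma adamsS_coe (n p : ℕ) (u : symmetricSubalgebra (Fin n) ℤ) :
    (adamsS n p u : MvPolynomial (Fin n) ℤ) = adamsOp n p u.val := rfl

private lemma adamsS_iter_psum (n p : ℕ) (k j : ℕ) :
    (adamsS n p)^[k] (psumS n j) = psumS n (p ^ k * j) := by
  induction k with
  | zero => simp [psumS]
  | succ k ih =>
    rw [Function.iterate_succ_apply', ih]
    apply Subtype.ext
    rw [adamsS_coe]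
    show adamsOp n p (psum (Fin n) ℤ (p ^ k * j)) = psum (Fin n) ℤ (p ^ (k + 1) * j)
    rw [adamsOp_psum]
    ring_nf

private lemma adamsS_frob (n p : ℕ) (hp : p.Prime) (u : symmetricSubalgebra (Fin n) ℤ) :
    ∃ v, adamsS n p u = u ^ p + (p : symmetricSubalgebra (Fin n) ℤ) * v := by
  obtain ⟨g, hg⟩ := adamsOp_sub_pow n p hp u.val
  have hgsym : g.IsSymmetric := by
    intro σ
    have hu : rename (R := ℤ) σ u.val = u.val := (mem_symmetricSubalgebra _).mp u.2 σ
    have e2 : C (p : ℤ) * g = adamsOp n p u.val - u.val ^ p := by linear_combination -hg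
    have h1 : C (p : ℤ) * rename σ g = C (p : ℤ) * g := by
      calc C (p : ℤ) * rename σ g = rename σ (C (p : ℤ) * g) := by rw [map_mul, rename_C]
      _ = rename σ (adamsOp n p u.val - u.val ^ p) := by rw [e2]
      _ = adamsOp n p u.val - u.val ^ p := by
          rw [map_sub, adamsOp_rename, map_pow, hu]
      _ = C (p : ℤ) * g := e2.symm
    have hC : (C (p : ℤ) : MvPolynomial (Fin n) ℤ) ≠ 0 := by
      simp [MvPolynomial.C_eq_zero, hp.ne_zero]
    exact mul_left_cancel₀ hC h1
  refine ⟨⟨g, (mem_symmetricSubalgebra _).mpr hgsym⟩, ?_⟩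
  apply Subtype.ext
  push_cast [adamsS_coe]
  rw [hg]
  norm_num [map_natCast (C : ℤ →+* MvPolynomial (Fin n) ℤ)]

private noncomputable def evS (n : ℕ) (b : Fin n → ℤ) :
    symmetricSubalgebra (Fin n) ℤ →ₐ[ℤ] ℤ :=
  (aeval b).comp (esymmAlgEquiv (Fin n) ℤ (Fintype.card_fin n)).symm.toAlgHom

private lemma evS_compat (n : ℕ) (b : Fin n → ℤ) (θ : Fin n → ℂ)
    (hθ : ∀ i : Fin n, aeval θ (esymm (Fin n) ℤ ((i : ℕ) + 1)) = ((b i : ℤ) : ℂ)) :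
    ∀ Q : symmetricSubalgebra (Fin n) ℤ, ((evS n b Q : ℤ) : ℂ) = aeval θ (Q : MvPolynomial (Fin n) ℤ) := by
  intro Q
  set E := esymmAlgEquiv (σ := Fin n) ℤ (Fintype.card_fin n) with hE
  set q := E.symm Q with hq
  have hQ : E q = Q := E.apply_symm_apply Q
  have hev : evS n b Q = aeval b q := rfl
  -- F = G as algebra homs to ℂ
  have hFG : ((aeval θ : MvPolynomial (Fin n) ℤ →ₐ[ℤ] ℂ).comp
        (((symmetricSubalgebra (Fin n) ℤ).val).comp E.toAlgHom))
      = (aeval (fun i : Fin n => ((b i : ℤ) : ℂ))) := by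
    apply MvPolynomial.algHom_ext
    intro i
    simp only [AlgHom.comp_apply, AlgEquiv.toAlgHom_eq_coe, AlgHom.coe_coe, aeval_X]
    have : E (X i) = ⟨esymm (Fin n) ℤ ((i : ℕ) + 1), esymm_isSymmetric _ _ _⟩ := by
      rw [hE]
      apply Subtype.ext
      rw [esymmAlgEquiv_apply, esymmAlgHom_apply, aeval_X]
    erw [this]
    exact hθ i
  have hGcast : ∀ r : MvPolynomial (Fin n) ℤ,
      (aeval (fun i : Fin n => ((b i : ℤ) : ℂ))) r = ((aeval b r : ℤ) : ℂ) := by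
    intro r
    have : ((Int.castRingHom ℂ).comp ((aeval b : MvPolynomial (Fin n) ℤ →ₐ[ℤ] ℤ) :
          MvPolynomial (Fin n) ℤ →+* ℤ))
        = (((aeval (fun i : Fin n => ((b i : ℤ) : ℂ)) : MvPolynomial (Fin n) ℤ →ₐ[ℤ] ℂ)) :
          MvPolynomial (Fin n) ℤ →+* ℂ) := by
      apply MvPolynomial.ringHom_ext
      · intro r; simp
      · intro i; simp
    exact (congrFun (congrArg DFunLike.coe this) r).symm
  calc ((evS n b Q : ℤ) : ℂ) = ((aeval b q : ℤ) : ℂ) := by rw [hev]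
  _ = (aeval (fun i : Fin n => ((b i : ℤ) : ℂ))) q := (hGcast q).symm
  _ = aeval θ ((E q) : MvPolynomial (Fin n) ℤ) := by
      rw [← hFG]; rfl
  _ = aeval θ (Q : MvPolynomial (Fin n) ℤ) := by rw [hQ]

private lemma core_congruence (n : ℕ) (b : Fin n → ℤ) (θ : Fin n → ℂ)
    (hθ : ∀ i : Fin n, aeval θ (esymm (Fin n) ℤ ((i : ℕ) + 1)) = ((b i : ℤ) : ℂ)) :
    ∃ t : ℕ → ℤ, (∀ j, (t j : ℂ) = ∑ i : Fin n, θ i ^ j) ∧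
      ∀ p k c : ℕ, p.Prime →
        (p : ℤ) ^ (k + 1) ∣ t (p ^ (k + 1) * c) - t (p ^ k * c) := by
  refine ⟨fun j => evS n b (psumS n j), fun j => ?_, fun p k c hp => ?_⟩
  · rw [evS_compat n b θ hθ]
    show aeval θ (psum (Fin n) ℤ j) = _
    simp [psum]
  · have hψ : ∀ u : symmetricSubalgebra (Fin n) ℤ,
        ∃ v, (adamsS n p).toRingHom u = u ^ p + (p : symmetricSubalgebra (Fin n) ℤ) * v :=
      fun u => adamsS_frob n p hp u
    have hd := dwork_lemma p hp (adamsS n p).toRingHom hψ (evS n b).toRingHom k (psumS n c)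
    have hco : ⇑(adamsS n p).toRingHom = ⇑(adamsS n p) := rfl
    rw [hco, adamsS_iter_psum n p (k + 1) c, adamsS_iter_psum n p k c] at hd
    exact hd

end SymmetricPart

section MoebiusPart

open ArithmeticFunction
open scoped ArithmeticFunction.Moebius ArithmeticFunction.zeta

set_option linter.unusedSectionVars false

section NT
variable (t : ℕ → ℤ)

private def Afun : ℕ → ℤ := fun e =>
  ∑ x ∈ e.divisorsAntidiagonal, (μ x.fst : ℤ) * t x.snd

private lemma Afun_inv : ∀ d > 0, ∑ e ∈ d.divisors, Afun t e = t d := by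
  have := (sum_eq_iff_sum_mul_moebius_eq (R := ℤ) (f := Afun t) (g := t)).mpr
    (fun n _ => rfl)
  exact this

variable (hcong : ∀ p k c : ℕ, p.Prime →
    (p : ℤ) ^ (k + 1) ∣ t (p ^ (k + 1) * c) - t (p ^ k * c))

include hcong

private lemma Afun_step (p k u : ℕ) (hp : p.Prime) (hu : u ≠ 0) (hpu : ¬ p ∣ u) :
    t (p ^ (k + 1) * u) - t (p ^ k * u) = ∑ c ∈ u.divisors, Afun t (p ^ (k + 1) * c) := by
  have hppos : 0 < p := hp.pos
  have h1 : 0 < p ^ (k + 1) * u := Nat.mul_pos (Nat.pow_pos hppos) (Nat.pos_of_ne_zero hu)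
  have h0 : 0 < p ^ k * u := Nat.mul_pos (Nat.pow_pos hppos) (Nat.pos_of_ne_zero hu)
  rw [← Afun_inv t _ h1, ← Afun_inv t _ h0]
  have hsub : (p ^ k * u).divisors ⊆ (p ^ (k + 1) * u).divisors :=
    Nat.divisors_subset_of_dvd h1.ne'
      (mul_dvd_mul_right (pow_dvd_pow p (Nat.le_succ k)) u)
  rw [← Finset.sum_sdiff_eq_sub hsub]
  have hkey : ∀ d ∈ (p ^ (k + 1) * u).divisors \ (p ^ k * u).divisors,
      p ^ (k + 1) ∣ d ∧ d / p ^ (k + 1) ∣ u := by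
    intro d hd
    rw [Finset.mem_sdiff, Nat.mem_divisors, Nat.mem_divisors] at hd
    obtain ⟨⟨hdvd, _⟩, hnot⟩ := hd
    have hd0 : d ≠ 0 := by
      rintro rfl
      exact h1.ne' (zero_dvd_iff.mp hdvd)
    set j := d.factorization p with hj
    set d' := ordCompl[p] d with hd'
    have hdd : p ^ j * d' = d := Nat.ordProj_mul_ordCompl_eq_self d p
    have hcop : Nat.Coprime (p ^ (k + 1)) d' :=
      Nat.Coprime.pow_left _ (Nat.coprime_ordCompl hp hd0)
    have hd'u : d' ∣ u := by
      have hdvd' : d' ∣ p ^ (k + 1) * u := dvd_trans (Dvd.intro_left _ hdd) hdvd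
      exact (Nat.Coprime.dvd_of_dvd_mul_left hcop.symm hdvd')
    have hjk : k + 1 ≤ j := by
      by_contra hle
      push_neg at hle
      apply hnot
      refine ⟨?_, h0.ne'⟩
      calc d = p ^ j * d' := hdd.symm
      _ ∣ p ^ k * u := mul_dvd_mul (pow_dvd_pow p (by omega)) hd'u
    have hpkd : p ^ (k + 1) ∣ d := dvd_trans (pow_dvd_pow p hjk) (Dvd.intro _ hdd)
    refine ⟨hpkd, ?_⟩
    obtain ⟨e, he⟩ := hpkd
    have : d / p ^ (k + 1) = e := by
      rw [he, Nat.mul_div_cancel_left _ (Nat.pow_pos hppos)]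
    rw [this]
    have : p ^ (k + 1) * e ∣ p ^ (k + 1) * u := he ▸ hdvd
    exact (mul_dvd_mul_iff_left (Nat.pow_pos (n := k + 1) hppos).ne').mp this
  have hmem2 : ∀ c ∈ u.divisors,
      p ^ (k + 1) * c ∈ (p ^ (k + 1) * u).divisors \ (p ^ k * u).divisors := by
    intro c hc
    rw [Nat.mem_divisors] at hc
    rw [Finset.mem_sdiff, Nat.mem_divisors, Nat.mem_divisors]
    refine ⟨⟨mul_dvd_mul_left _ hc.1, h1.ne'⟩, ?_⟩
    rintro ⟨habs, -⟩
    have h2 : p ^ (k + 1) ∣ p ^ k * u := dvd_trans (dvd_mul_right _ c) habs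
    have h3 : p ^ k * p ∣ p ^ k * u := by
      rw [← pow_succ]
      exact h2
    exact hpu ((mul_dvd_mul_iff_left (Nat.pow_pos (n := k) hppos).ne').mp h3)
  refine Finset.sum_nbij' (i := fun d => d / p ^ (k + 1)) (j := fun c => p ^ (k + 1) * c)
    ?_ ?_ ?_ ?_ ?_
  · intro d hd
    exact Nat.mem_divisors.mpr ⟨(hkey d hd).2, hu⟩
  · exact hmem2
  · intro d hd
    exact Nat.mul_div_cancel' (hkey d hd).1
  · intro c _
    exact Nat.mul_div_cancel_left _ (Nat.pow_pos hppos)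
  · intro d hd
    rw [Nat.mul_div_cancel' (hkey d hd).1]

private lemma Afun_ppow_dvd (p k : ℕ) (hp : p.Prime) :
    ∀ u : ℕ, u ≠ 0 → ¬ p ∣ u → (p : ℤ) ^ (k + 1) ∣ Afun t (p ^ (k + 1) * u) := by
  intro u
  induction u using Nat.strong_induction_on with
  | _ u ih =>
    intro hu hpu
    have hstep := Afun_step t hcong p k u hp hu hpu
    rw [← Nat.insert_self_properDivisors hu, Finset.sum_insert (by simp [Nat.mem_properDivisors])]
      at hstep
    have hAe : Afun t (p ^ (k + 1) * u)
        = (t (p ^ (k + 1) * u) - t (p ^ k * u))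
          - ∑ c ∈ u.properDivisors, Afun t (p ^ (k + 1) * c) := by
      linear_combination -hstep
    rw [hAe]
    refine dvd_sub (hcong p k u hp) (Finset.dvd_sum ?_)
    intro c hc
    rw [Nat.mem_properDivisors] at hc
    have hc0 : c ≠ 0 := by
      rintro rfl
      exact hu (Nat.eq_zero_of_zero_dvd hc.1)
    exact ih c hc.2 hc0 (fun h => hpu (h.trans hc.1))

private lemma Afun_self_dvd : ∀ e : ℕ, e ≠ 0 → (e : ℤ) ∣ Afun t e := by
  intro e he
  have hnat : ∏ p ∈ e.primeFactors, p ^ e.factorization p = e := by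
    conv_rhs => rw [← Nat.factorization_prod_pow_eq_self he]
    rfl
  have hprod : ∏ p ∈ e.primeFactors, ((p : ℤ) ^ e.factorization p) = (e : ℤ) := by
    conv_rhs => rw [← hnat]
    push_cast
    ring
  rw [← hprod]
  apply Finset.prod_dvd_of_coprime
  · intro q hq r hr hqr
    have hq' := Nat.prime_of_mem_primeFactors hq
    have hr' := Nat.prime_of_mem_primeFactors hr
    have : IsCoprime ((q : ℤ) ^ e.factorization q) ((r : ℤ) ^ e.factorization r) := by
      apply IsCoprime.pow
      rw [Nat.isCoprime_iff_coprime]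
      exact (Nat.coprime_primes hq' hr').mpr hqr
    exact this
  · intro q hq
    have hq' := Nat.prime_of_mem_primeFactors hq
    have hk : 1 ≤ e.factorization q :=
      hq'.factorization_pos_of_dvd he (Nat.dvd_of_mem_primeFactors hq)
    obtain ⟨k, hk⟩ : ∃ k, e.factorization q = k + 1 := ⟨_, (Nat.succ_pred_eq_of_pos hk).symm⟩
    have hcomp := Nat.ordProj_mul_ordCompl_eq_self e q
    have h1 := Afun_ppow_dvd t hcong q k hq' (ordCompl[q] e)
      (Nat.ordCompl_pos q he).ne' (Nat.not_dvd_ordCompl hq' he)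
    rw [← hk, hcomp] at h1
    exact h1

private lemma phi_sum_dvd (m : ℕ) (hm : 0 < m) :
    (m : ℤ) ∣ ∑ j ∈ m.divisors, (Nat.totient (m / j) : ℤ) * t j := by
  classical
  set Φ : ArithmeticFunction ℤ := ⟨fun d => (d.totient : ℤ), by simp⟩ with hΦ
  set T : ArithmeticFunction ℤ := ⟨fun d => if d = 0 then 0 else t d, if_pos rfl⟩ with hT
  set A' : ArithmeticFunction ℤ := ⟨fun d => if d = 0 then 0 else Afun t d, if_pos rfl⟩ with hA'
  set I : ArithmeticFunction ℤ := ⟨fun d => (d : ℤ), by simp⟩ with hI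
  have hTza : T = ↑ζ * A' := by
    ext d
    rcases eq_or_ne d 0 with rfl | hd
    · simp
    · rw [coe_zeta_mul_apply]
      show (if d = 0 then 0 else t d) = _
      rw [if_neg hd]
      rw [← Afun_inv t d (Nat.pos_of_ne_zero hd)]
      apply Finset.sum_congr rfl
      intro e he
      exact (if_neg (Nat.pos_of_mem_divisors he).ne').symm
  have hΦz : Φ * ↑ζ = I := by
    ext d
    rcases eq_or_ne d 0 with rfl | hd
    · simp
    · rw [coe_mul_zeta_apply]
      show _ = (d : ℤ)
      have : ∑ i ∈ d.divisors, Φ i = ∑ i ∈ d.divisors, (Nat.totient i : ℤ) := rfl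
      rw [this, ← Nat.cast_sum, Nat.sum_totient]
  have hmain : Φ * T = I * A' := by
    rw [hTza, ← mul_assoc, hΦz]
  have h1 : (Φ * T) m = ∑ j ∈ m.divisors, (Nat.totient (m / j) : ℤ) * t j := by
    rw [mul_apply]
    rw [Nat.sum_divisorsAntidiagonal' (f := fun a b => Φ a * T b)]
    apply Finset.sum_congr rfl
    intro j hj
    have hj0 : j ≠ 0 := (Nat.pos_of_mem_divisors hj).ne'
    show Φ (m / j) * T j = _
    have : T j = t j := if_neg hj0
    rw [this]
    rfl
  rw [← h1, hmain, mul_apply]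
  apply Finset.dvd_sum
  intro x hx
  obtain ⟨hxm, -⟩ := Nat.mem_divisorsAntidiagonal.mp hx
  have hx2 : x.2 ≠ 0 := by
    rintro h2
    rw [h2, mul_zero] at hxm
    exact hm.ne' hxm.symm
  obtain ⟨w, hw⟩ := Afun_self_dvd t hcong x.2 hx2
  refine ⟨w, ?_⟩
  have hA2 : A' x.2 = Afun t x.2 := if_neg hx2
  show I x.1 * A' x.2 = (m : ℤ) * w
  rw [hA2, hw, ← hxm]
  show (x.1 : ℤ) * ((x.2 : ℤ) * w) = ((x.1 * x.2 : ℕ) : ℤ) * w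
  push_cast
  ring
end NT

end MoebiusPart

open Polynomial

private lemma exists_enum {n : ℕ} (M : Multiset ℂ) (h : Multiset.card M = n) :
    ∃ f : Fin n → ℂ, Finset.univ.val.map f = M := by
  obtain ⟨l, rfl⟩ : ∃ l : List ℂ, ↑l = M := ⟨M.toList, Multiset.coe_toList M⟩
  have h' : l.length = n := by simpa using h
  subst h'
  exact ⟨l.get, by rw [Fin.univ_val_map, List.ofFn_get]⟩


theorem F_is_integer (n : ℕ) (hn : 1 ≤ n) (a : Fin n → ℤ) (s : ℕ → ℤ)
    (hs : ∀ j, 1 ≤ j → (s j : ℂ) = rootPowerSum n a j)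
    (m : ℕ) (hm : 1 ≤ m) :
    ∃ k : ℤ, Fval s m = (k : ℚ) := by
  classical
  set P : Polynomial ℂ := X ^ n + ∑ i : Fin n,
    C ((-1 : ℂ) ^ ((i : ℕ) + 1) * (a i : ℂ)) * X ^ (n - ((i : ℕ) + 1)) with hP
  have hQdeg : (∑ i : Fin n,
      C ((-1 : ℂ) ^ ((i : ℕ) + 1) * (a i : ℂ)) * X ^ (n - ((i : ℕ) + 1))).degree < (n : WithBot ℕ) := by
    apply lt_of_le_of_lt (Polynomial.degree_sum_le _ _)
    rw [Finset.sup_lt_iff (by exact_mod_cast WithBot.bot_lt_coe n)]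
    intro i _
    apply lt_of_le_of_lt (Polynomial.degree_C_mul_X_pow_le _ _)
    exact_mod_cast (by omega : n - ((i : ℕ) + 1) < n)
  have hmonic : P.Monic := Polynomial.monic_X_pow_add hQdeg
  have hPdeg : P.natDegree = n := by
    have hdeg : P.degree = n := by
      rw [hP, Polynomial.degree_add_eq_left_of_degree_lt (by rwa [Polynomial.degree_X_pow]),
        Polynomial.degree_X_pow]
    exact Polynomial.natDegree_eq_of_degree_eq_some hdeg
  have hsplit : Polynomial.Splits P := IsAlgClosed.splits P
  have hcard : Multiset.card P.roots = n := by
    rw [Polynomial.splits_iff_card_roots.mp hsplit, hPdeg]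
  set M : Multiset ℂ := P.roots.map (fun z => -z) with hM
  have hcardM : Multiset.card M = n := by rw [hM, Multiset.card_map, hcard]
  obtain ⟨θ, hθM⟩ := exists_enum M hcardM
  have hprod : (M.map (fun r => X + C r)).prod = P := by
    rw [hM, Multiset.map_map]
    have h2 : P = (P.roots.map (fun a => X - C a)).prod :=
      hsplit.eq_prod_roots_of_monic hmonic
    rw [show ((fun r => X + C r) ∘ fun z => -z) = (fun a : ℂ => X - C a) by
      funext z; rw [Function.comp_apply, map_neg, ← sub_eq_add_neg]]
    exact h2.symm
  have hcoeffP : ∀ i : Fin n, P.coeff (n - ((i : ℕ) + 1))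
      = (((-1 : ℤ) ^ ((i : ℕ) + 1) * a i : ℤ) : ℂ) := by
    intro i
    rw [hP, Polynomial.coeff_add, Polynomial.coeff_X_pow,
      if_neg (by omega : ¬ n - ((i : ℕ) + 1) = n), zero_add, Polynomial.finset_sum_coeff]
    rw [Finset.sum_eq_single i]
    · rw [Polynomial.coeff_C_mul, Polynomial.coeff_X_pow, if_pos rfl, mul_one]
      push_cast
      ring
    · intro b _ hbi
      rw [Polynomial.coeff_C_mul, Polynomial.coeff_X_pow,
        if_neg (fun habs => hbi (Fin.ext (by omega)))]
      ring
    · intro habs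
      exact absurd (Finset.mem_univ i) habs
  have hesymm : ∀ i : Fin n, M.esymm ((i : ℕ) + 1)
      = (((-1 : ℤ) ^ ((i : ℕ) + 1) * a i : ℤ) : ℂ) := by
    intro i
    have hk : n - ((i : ℕ) + 1) ≤ Multiset.card M := by omega
    have hv := Multiset.prod_X_add_C_coeff M hk
    rw [hprod, hcardM] at hv
    rw [show n - (n - ((i : ℕ) + 1)) = (i : ℕ) + 1 by omega] at hv
    rw [← hv, hcoeffP i]
  have hθ : ∀ i : Fin n, MvPolynomial.aeval θ
      (MvPolynomial.esymm (Fin n) ℤ ((i : ℕ) + 1))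
      = ((((-1 : ℤ) ^ ((i : ℕ) + 1) * a i : ℤ)) : ℂ) := by
    intro i
    rw [MvPolynomial.aeval_esymm_eq_multiset_esymm, hθM]
    exact hesymm i
  obtain ⟨t, ht1, ht2⟩ := core_congruence n (fun i => (-1 : ℤ) ^ ((i : ℕ) + 1) * a i) θ hθ
  have hts : ∀ j, 1 ≤ j → t j = (-1) ^ j * s j := by
    intro j hj
    have h2 : ((t j : ℤ) : ℂ) = (((-1 : ℤ) ^ j * s j : ℤ) : ℂ) := by
      rw [ht1 j]
      have hsum : ∑ i : Fin n, θ i ^ j = (M.map (fun x => x ^ j)).sum := by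
        rw [← hθM, Multiset.map_map]
        rfl
      rw [hsum, hM, Multiset.map_map]
      push_cast
      rw [hs j hj]
      have hR : rootPowerSum n a j = (P.roots.map (fun z => z ^ j)).sum := rfl
      rw [hR, show ((fun x : ℂ => x ^ j) ∘ fun z => -z) = fun z : ℂ => (-1) ^ j * z ^ j from
        funext fun z => by rw [Function.comp_apply, neg_pow], Multiset.sum_map_mul_left]
    exact_mod_cast h2
  have hm0 : m ≠ 0 := by omega
  obtain ⟨w, hw⟩ := phi_sum_dvd t ht2 m (by omega)
  refine ⟨w, ?_⟩
  rw [Fval]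
  have hterm : ∀ j ∈ m.divisors,
      (-1 : ℚ) ^ j * (s j : ℚ) / (j : ℚ) * ∏ p ∈ (m / j).primeFactors, (1 - 1 / (p : ℚ))
      = (((Nat.totient (m / j) : ℤ) * t j : ℤ) : ℚ) / (m : ℚ) := by
    intro j hj
    obtain ⟨hjd, -⟩ := Nat.mem_divisors.mp hj
    have hj0 : j ≠ 0 := (Nat.pos_of_mem_divisors hj).ne'
    have hr0 : (m / j) ≠ 0 :=
      (Nat.div_pos (Nat.le_of_dvd (by omega) hjd) (Nat.pos_of_ne_zero hj0)).ne'
    have hjr : j * (m / j) = m := Nat.mul_div_cancel' hjd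
    have htot : ∏ p ∈ (m / j).primeFactors, (1 - 1 / (p : ℚ))
        = (Nat.totient (m / j) : ℚ) / ((m / j : ℕ) : ℚ) := by
      have h3 := Nat.totient_eq_mul_prod_factors (m / j)
      simp only [one_div]
      rw [eq_div_iff (by exact_mod_cast hr0 : ((m / j : ℕ) : ℚ) ≠ 0)]
      rw [h3]
      ring
    rw [htot, hts j (Nat.pos_of_ne_zero hj0)]
    have hjq : (j : ℚ) ≠ 0 := by exact_mod_cast hj0
    have hrq : ((m / j : ℕ) : ℚ) ≠ 0 := by exact_mod_cast hr0
    have hmq : ((j : ℚ)) * ((m / j : ℕ) : ℚ) = (m : ℚ) := by exact_mod_cast hjr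
    push_cast
    field_simp
    rw [← hmq]
    ring
  rw [Finset.sum_congr rfl hterm, ← Finset.sum_div]
  have hcast : ∑ j ∈ m.divisors, (((Nat.totient (m / j) : ℤ) * t j : ℤ) : ℚ)
      = ((∑ j ∈ m.divisors, (Nat.totient (m / j) : ℤ) * t j : ℤ) : ℚ) := by
    push_cast
    rfl
  rw [hcast, hw]
  push_cast
  rw [mul_comm, mul_div_assoc, div_self (by exact_mod_cast hm0 : (m : ℚ) ≠ 0), mul_one]
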